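/- β-reduction on the resource λ-calculus with coefficients in ℕ is strongly normalizing: there is no infinite sequence of →β reduction steps starting from any element of ℕ⟨Δ⟩. -/

import Mathlib

set_option maxHeartbeats 1000000

noncomputable section
open scoped Classical

/-- Simple terms of the resource λ-calculus.  The argument of an application is a
finite multiset of simple terms (a simple poly-term), represented as a `List`
(read up to permutation).  The syntax is enriched with the constant `c0`. -/
inductive RTerm : Type
  | var : ℕ → RTerm
  | lam : ℕ → RTerm → RTerm
  | app : RTerm → List RTerm → RTerm
  | c0  : RTerm

/-- `deg x s` is the number of (free) occurrences of the variable `x` in `s`. -/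
def RTerm.deg (x : ℕ) : RTerm → ℕ
  | .var y => if y = x then 1 else 0
  | .lam y t => if y = x then 0 else t.deg x
  | .app t T => t.deg x + (T.attach.map (fun u => u.1.deg x)).sum
  | .c0 => 0
decreasing_by all_goals (try simp_wf) <;> first
  | (have := List.sizeOf_lt_of_mem u.2; omega)
  | omega

/-- Simultaneous substitution of (optional) terms for variables. -/
def RTerm.msubst (σ : ℕ → Option RTerm) : RTerm → RTerm
  | .var y => (σ y).getD (.var y)
  | .lam y t => .lam y (t.msubst (fun z => if z = y then none else σ z))
  | .app t T => .app (t.msubst σ) (T.attach.map (fun u => u.1.msubst σ))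
  | .c0 => .c0
decreasing_by all_goals (try simp_wf) <;> first
  | (have := List.sizeOf_lt_of_mem u.2; omega)
  | omega

/-- `subst x u t` is `t[u/x]`. -/
def RTerm.subst (x : ℕ) (u : RTerm) (t : RTerm) : RTerm :=
  t.msubst (fun y => if y = x then some u else none)

/-- Size of a simple term. -/
def RTerm.size : RTerm → ℕ
  | .var _ => 1
  | .lam _ t => t.size + 1
  | .app t T => t.size + (T.attach.map (fun u => u.1.size)).sum + 1
  | .c0 => 1
decreasing_by all_goals (try simp_wf) <;> first
  | (have := List.sizeOf_lt_of_mem u.2; omega)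
  | omega

end
noncomputable section
open scoped Classical

-- One-step linear derivative: `rderiv x u s` is the formal sum (with
-- ℕ-coefficients) of all the ways of replacing exactly one occurrence of `x`
-- in `s` by `u`.
mutual
def rderiv (x : ℕ) (u : RTerm) : RTerm → (RTerm →₀ ℕ)
  | .var y => if y = x then Finsupp.single u 1 else 0
  | .lam y t => if y = x then 0 else (rderiv x u t).mapDomain (RTerm.lam y)
  | .app t T => (rderiv x u t).mapDomain (fun s => RTerm.app s T)
      + (rderivList x u T).mapDomain (RTerm.app t)
  | .c0 => 0

def rderivList (x : ℕ) (u : RTerm) : List RTerm → (List RTerm →₀ ℕ)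
  | [] => 0
  | t :: T => (rderiv x u t).mapDomain (· :: T) + (rderivList x u T).mapDomain (t :: ·)
end

/-- Linear extension of `rderiv` to formal sums. -/
def rderivC (x : ℕ) (u : RTerm) (𝒮 : RTerm →₀ ℕ) : RTerm →₀ ℕ :=
  𝒮.sum (fun t n => n • rderiv x u t)

/-- The linear substitution `∂_x(s, t₁⋯tₙ)`: iterated linear derivative of `s`
at `x` along the elements of `T`, keeping only the terms in which all
occurrences of `x` have been consumed (it is `0` unless `deg x s = T.length`,
assuming the usual convention that `x` is not free in the elements of `T`). -/
def rsub (x : ℕ) (T : List RTerm) (s : RTerm) : RTerm →₀ ℕ :=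
  (T.foldl (fun 𝒮 u => rderivC x u 𝒮) (Finsupp.single s 1)).filter
    (fun t => t.deg x = 0)

/-- Linear extension of `∂_x` to formal sums in the first argument. -/
def rsubC (x : ℕ) (𝒮 : RTerm →₀ ℕ) (T : List RTerm) : RTerm →₀ ℕ :=
  𝒮.sum fun s n => n • rsub x T s

end
noncomputable section
open scoped Classical

/-- One-step β-reduction from a simple term to a formal sum:
the redex rule `⟨λx.s⟩T →β ∂_x(s,T)` closed under the contextual rules. -/
inductive Step : RTerm → (RTerm →₀ ℕ) → Prop
  | redex (x : ℕ) (s : RTerm) (T : List RTerm) :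
      Step (.app (.lam x s) T) (rsub x T s)
  | appL {s : RTerm} {𝒮 : RTerm →₀ ℕ} (T : List RTerm) :
      Step s 𝒮 → Step (.app s T) (𝒮.mapDomain (fun v => .app v T))
  | appR {s : RTerm} {𝒮 : RTerm →₀ ℕ} (u : RTerm) (T₁ T₂ : List RTerm) :
      Step s 𝒮 →
        Step (.app u (T₁ ++ s :: T₂)) (𝒮.mapDomain (fun v => .app u (T₁ ++ v :: T₂)))
  | lam {s : RTerm} {𝒮 : RTerm →₀ ℕ} (x : ℕ) :
      Step s 𝒮 → Step (.lam x s) (𝒮.mapDomain (.lam x))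

/-- β-reduction on formal ℕ-linear combinations of simple terms:
`s + u →β 𝒮 + u` whenever `s →β 𝒮`. -/
inductive RStep : (RTerm →₀ ℕ) → (RTerm →₀ ℕ) → Prop
  | mk {s : RTerm} {𝒮 U : RTerm →₀ ℕ} :
      Step s 𝒮 → RStep (Finsupp.single s 1 + U) (𝒮 + U)

/-- An element of `ℕ⟨Δ⟩` is β-normal when no `→β` step applies to it. -/
def RNormal (a : RTerm →₀ ℕ) : Prop := ∀ b, ¬ RStep a b

end
noncomputable section SN
open scoped Classical

def listSize (T : List RTerm) : ℕ := (T.map RTerm.size).sum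

lemma size_app (t : RTerm) (T : List RTerm) :
    (RTerm.app t T).size = t.size + listSize T + 1 := by
  rw [RTerm.size]; simp [listSize]

lemma size_pos (t : RTerm) : 1 ≤ t.size := by
  cases t <;> rw [RTerm.size] <;> omega

lemma listSize_cons (t : RTerm) (T : List RTerm) :
    listSize (t :: T) = t.size + listSize T := by simp [listSize]

lemma listSize_append (T₁ T₂ : List RTerm) :
    listSize (T₁ ++ T₂) = listSize T₁ + listSize T₂ := by simp [listSize]

lemma length_le_listSize (T : List RTerm) : T.length ≤ listSize T := by
  induction T with
  | nil => simp [listSize]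
  | cons t T ih => rw [listSize_cons]; have := size_pos t; simp; omega

/-- total mass (sum of coefficients) of a finitely supported function to ℕ -/
def mass {α : Type*} (F : α →₀ ℕ) : ℕ := F.sum fun _ n => n

lemma mass_zero {α : Type*} : mass (0 : α →₀ ℕ) = 0 := by simp [mass]

lemma mass_add {α : Type*} (F G : α →₀ ℕ) : mass (F + G) = mass F + mass G :=
  Finsupp.sum_add_index' (fun _ => rfl) (fun _ _ _ => rfl)

lemma mass_single {α : Type*} (a : α) (n : ℕ) : mass (Finsupp.single a n) = n := by
  simp [mass]

lemma mass_mapDomain {α β : Type*} (f : α → β) (F : α →₀ ℕ) :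
    mass (F.mapDomain f) = mass F :=
  Finsupp.sum_mapDomain_index (fun _ => rfl) (fun _ _ _ => rfl)

lemma mass_smul {α : Type*} (n : ℕ) (F : α →₀ ℕ) : mass (n • F) = n * mass F := by
  rw [mass, Finsupp.sum_smul_index' (fun _ => rfl)]
  simp only [smul_eq_mul, mass, Finsupp.sum, Finset.mul_sum]

lemma mass_filter_le {α : Type*} (p : α → Prop) [DecidablePred p] (F : α →₀ ℕ) :
    mass (F.filter p) ≤ mass F := by
  rw [mass, mass, Finsupp.sum, Finsupp.sum]
  calc ∑ a ∈ (F.filter p).support, (F.filter p) a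
      ≤ ∑ a ∈ F.support, (F.filter p) a := by
        apply Finset.sum_le_sum_of_subset
        rw [Finsupp.support_filter]; exact Finset.filter_subset _ _
    _ ≤ ∑ a ∈ F.support, F a := by
        apply Finset.sum_le_sum
        intro a _
        rw [Finsupp.filter_apply]
        split <;> omega

mutual
lemma rderiv_size (x : ℕ) (u : RTerm) (t : RTerm) :
    ∀ t' ∈ (rderiv x u t).support, t'.size + 1 ≤ t.size + u.size := by
  cases t with
  | var y =>
      intro t' ht'
      rw [rderiv] at ht'
      split at ht'
      · rw [Finsupp.support_single_ne_zero _ one_ne_zero] at ht'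
        simp at ht'
        subst ht'
        rw [RTerm.size]; omega
      · simp at ht'
  | lam y t =>
      intro t' ht'
      rw [rderiv] at ht'
      split at ht'
      · simp at ht'
      · have := Finsupp.mapDomain_support ht'
        simp only [Finset.mem_image] at this
        obtain ⟨a, ha, rfl⟩ := this
        have := rderiv_size x u t a ha
        rw [RTerm.size]; rw [RTerm.size]; omega
  | app t T =>
      intro t' ht'
      rw [rderiv] at ht'
      have := Finsupp.support_add ht'
      rw [Finset.mem_union] at this
      rcases this with h | h
      · have := Finsupp.mapDomain_support h
        simp only [Finset.mem_image] at this
        obtain ⟨a, ha, rfl⟩ := this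
        have := rderiv_size x u t a ha
        rw [size_app, size_app]; omega
      · have := Finsupp.mapDomain_support h
        simp only [Finset.mem_image] at this
        obtain ⟨a, ha, rfl⟩ := this
        have := rderivList_size x u T a ha
        rw [size_app, size_app]; omega
  | c0 =>
      intro t' ht'
      rw [rderiv] at ht'
      simp at ht'

lemma rderivList_size (x : ℕ) (u : RTerm) (T : List RTerm) :
    ∀ T' ∈ (rderivList x u T).support, listSize T' + 1 ≤ listSize T + u.size := by
  cases T with
  | nil => intro T' hT'; rw [rderivList] at hT'; simp at hT'
  | cons t T =>
      intro T' hT'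
      rw [rderivList] at hT'
      have := Finsupp.support_add hT'
      rw [Finset.mem_union] at this
      rcases this with h | h
      · have := Finsupp.mapDomain_support h
        simp only [Finset.mem_image] at this
        obtain ⟨a, ha, rfl⟩ := this
        have := rderiv_size x u t a ha
        rw [listSize_cons, listSize_cons]; omega
      · have := Finsupp.mapDomain_support h
        simp only [Finset.mem_image] at this
        obtain ⟨a, ha, rfl⟩ := this
        have := rderivList_size x u T a ha
        rw [listSize_cons, listSize_cons]; omega
end

mutual
lemma rderiv_mass (x : ℕ) (u : RTerm) (t : RTerm) :
    mass (rderiv x u t) ≤ t.size := by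
  cases t with
  | var y =>
      rw [rderiv]; split
      · rw [mass_single, RTerm.size]
      · rw [mass_zero]; omega
  | lam y t =>
      rw [rderiv]; split
      · rw [mass_zero]; omega
      · rw [mass_mapDomain, RTerm.size]
        have := rderiv_mass x u t; omega
  | app t T =>
      rw [rderiv, mass_add, mass_mapDomain, mass_mapDomain, size_app]
      have := rderiv_mass x u t
      have := rderivList_mass x u T
      omega
  | c0 => rw [rderiv, mass_zero]; omega

lemma rderivList_mass (x : ℕ) (u : RTerm) (T : List RTerm) :
    mass (rderivList x u T) ≤ listSize T := by
  cases T with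
  | nil => rw [rderivList, mass_zero]; exact Nat.zero_le _
  | cons t T =>
      rw [rderivList, mass_add, mass_mapDomain, mass_mapDomain, listSize_cons]
      have := rderiv_mass x u t
      have := rderivList_mass x u T
      omega
end

end SN
noncomputable section SN2
open scoped Classical

lemma rderivC_size {x : ℕ} {u : RTerm} {B : ℕ} {F : RTerm →₀ ℕ}
    (hF : ∀ t ∈ F.support, t.size ≤ B) :
    ∀ t' ∈ (rderivC x u F).support, t'.size ≤ B + u.size := by
  intro t' ht'
  rw [rderivC] at ht'
  have := Finsupp.support_sum ht'
  rw [Finset.mem_biUnion] at this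
  obtain ⟨a, ha, h⟩ := this
  have h2 : t' ∈ (rderiv x u a).support := Finsupp.support_smul h
  have := rderiv_size x u a t' h2
  have := hF a ha
  omega

lemma rderivC_mass {x : ℕ} {u : RTerm} {B : ℕ} {F : RTerm →₀ ℕ}
    (hF : ∀ t ∈ F.support, t.size ≤ B) :
    mass (rderivC x u F) ≤ mass F * B := by
  rw [rderivC, Finsupp.sum]
  have key : mass (∑ a ∈ F.support, F a • rderiv x u a)
      = ∑ a ∈ F.support, mass (F a • rderiv x u a) := by
    classical
    induction F.support using Finset.induction with
    | empty => simp [mass_zero]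
    | insert _ _ h ih => rw [Finset.sum_insert h, Finset.sum_insert h, mass_add, ih]
  rw [key]
  have : mass F * B = ∑ a ∈ F.support, F a * B := by
    rw [mass, Finsupp.sum, Finset.sum_mul]
  rw [this]
  apply Finset.sum_le_sum
  intro a ha
  rw [mass_smul]
  have h1 := rderiv_mass x u a
  have h2 := hF a ha
  exact Nat.mul_le_mul_left _ (le_trans h1 h2)

lemma foldl_bound (x : ℕ) (T : List RTerm) :
    ∀ (F : RTerm →₀ ℕ) (B : ℕ), (∀ t ∈ F.support, t.size ≤ B) →
      (∀ t' ∈ (T.foldl (fun 𝒮 u => rderivC x u 𝒮) F).support, t'.size ≤ B + listSize T) ∧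
      mass (T.foldl (fun 𝒮 u => rderivC x u 𝒮) F) ≤ mass F * (B + listSize T) ^ T.length := by
  induction T with
  | nil =>
      intro F B hF
      constructor
      · intro t' ht'; have := hF t' ht'; simp [listSize]; simpa [listSize] using this
      · simp [listSize]
  | cons u T ih =>
      intro F B hF
      have hF' : ∀ t ∈ (rderivC x u F).support, t.size ≤ B + u.size := rderivC_size hF
      obtain ⟨ihs, ihm⟩ := ih (rderivC x u F) (B + u.size) hF'
      have hfold : (u :: T).foldl (fun 𝒮 v => rderivC x v 𝒮) F
          = T.foldl (fun 𝒮 v => rderivC x v 𝒮) (rderivC x u F) := rfl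
      rw [hfold, listSize_cons]
      constructor
      · intro t' ht'; have := ihs t' ht'; omega
      · have h1 : mass (rderivC x u F) ≤ mass F * B := rderivC_mass hF
        have hB : B ≤ B + (u.size + listSize T) := Nat.le_add_right _ _
        calc mass (T.foldl (fun 𝒮 v => rderivC x v 𝒮) (rderivC x u F))
            ≤ mass (rderivC x u F) * (B + u.size + listSize T) ^ T.length := ihm
          _ ≤ (mass F * B) * (B + (u.size + listSize T)) ^ T.length := by
              apply Nat.mul_le_mul h1
              apply Nat.pow_le_pow_left; omega
          _ ≤ mass F * ((B + (u.size + listSize T)) * (B + (u.size + listSize T)) ^ T.length) := by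
              rw [mul_assoc]
              apply Nat.mul_le_mul_left
              apply Nat.mul_le_mul_right _ hB
          _ = mass F * (B + (u.size + listSize T)) ^ (u :: T).length := by
              rw [← pow_succ']; rfl

lemma rsub_size (x : ℕ) (T : List RTerm) (s : RTerm) :
    ∀ t' ∈ (rsub x T s).support, t'.size ≤ s.size + listSize T := by
  intro t' ht'
  rw [rsub, Finsupp.support_filter, Finset.mem_filter] at ht'
  have hF : ∀ t ∈ (Finsupp.single s (1:ℕ)).support, t.size ≤ s.size := by
    intro t ht
    rw [Finsupp.support_single_ne_zero _ one_ne_zero] at ht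
    simp at ht; subst ht; exact le_refl _
  exact (foldl_bound x T _ s.size hF).1 t' ht'.1

lemma rsub_mass (x : ℕ) (T : List RTerm) (s : RTerm) :
    mass (rsub x T s) ≤ (s.size + listSize T) ^ (s.size + listSize T) := by
  have hF : ∀ t ∈ (Finsupp.single s (1:ℕ)).support, t.size ≤ s.size := by
    intro t ht
    rw [Finsupp.support_single_ne_zero _ one_ne_zero] at ht
    simp at ht; subst ht; exact le_refl _
  have h1 := (foldl_bound x T (Finsupp.single s 1) s.size hF).2
  rw [mass_single] at h1
  calc mass (rsub x T s) ≤ mass (T.foldl (fun 𝒮 u => rderivC x u 𝒮) (Finsupp.single s 1)) := by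
        rw [rsub]; exact mass_filter_le _ _
    _ ≤ 1 * (s.size + listSize T) ^ T.length := h1
    _ ≤ (s.size + listSize T) ^ (s.size + listSize T) := by
        rw [one_mul]
        apply Nat.pow_le_pow_right
        · have := size_pos s; omega
        · have := length_le_listSize T; omega

end SN2
noncomputable section SN3
open scoped Classical

lemma pow_self_mono {a b : ℕ} (h : a ≤ b) : a ^ a ≤ b ^ b := by
  rcases Nat.eq_zero_or_pos b with hb | hb
  · subst hb; interval_cases a; simp
  · calc a ^ a ≤ b ^ a := Nat.pow_le_pow_left h a
      _ ≤ b ^ b := Nat.pow_le_pow_right hb h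

lemma step_bound {s : RTerm} {𝒮 : RTerm →₀ ℕ} (h : Step s 𝒮) :
    (∀ t ∈ 𝒮.support, t.size < s.size) ∧ mass 𝒮 ≤ s.size ^ s.size := by
  induction h with
  | redex x s T =>
      have hsz := rsub_size x T s
      have hm := rsub_mass x T s
      have hs : (RTerm.app (RTerm.lam x s) T).size = s.size + 1 + listSize T + 1 := by
        rw [size_app, RTerm.size]
      constructor
      · intro t ht; have := hsz t ht; omega
      · rw [hs]
        refine le_trans hm (pow_self_mono ?_); omega
  | appL T hstep ih =>
      obtain ⟨ihs, ihm⟩ := ih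
      constructor
      · intro t ht
        have := Finsupp.mapDomain_support ht
        simp only [Finset.mem_image] at this
        obtain ⟨a, ha, rfl⟩ := this
        have := ihs a ha
        rw [size_app, size_app]; omega
      · rw [mass_mapDomain]
        refine le_trans ihm (pow_self_mono ?_)
        rw [size_app]; omega
  | appR u T₁ T₂ hstep ih =>
      obtain ⟨ihs, ihm⟩ := ih
      rename_i s' 𝒮'
      have key : ∀ v : RTerm, (RTerm.app u (T₁ ++ v :: T₂)).size
          = u.size + listSize T₁ + v.size + listSize T₂ + 1 := by
        intro v; rw [size_app, listSize_append, listSize_cons]; omega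
      constructor
      · intro t ht
        have := Finsupp.mapDomain_support ht
        simp only [Finset.mem_image] at this
        obtain ⟨a, ha, rfl⟩ := this
        have := ihs a ha
        rw [key, key]; omega
      · rw [mass_mapDomain]
        refine le_trans ihm (pow_self_mono ?_)
        rw [key]; omega
  | lam x hstep ih =>
      obtain ⟨ihs, ihm⟩ := ih
      constructor
      · intro t ht
        have := Finsupp.mapDomain_support ht
        simp only [Finset.mem_image] at this
        obtain ⟨a, ha, rfl⟩ := this
        have := ihs a ha
        rw [RTerm.size, RTerm.size]; omega
      · rw [mass_mapDomain]
        refine le_trans ihm (pow_self_mono ?_)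
        rw [RTerm.size]; omega

/-- fast-growing weight function -/
def gw : ℕ → ℕ
  | 0 => 1
  | n + 1 => (n + 1) ^ (n + 1) * gw n + 1

lemma gw_pos (n : ℕ) : 1 ≤ gw n := by
  cases n with
  | zero => simp [gw]
  | succ n => rw [gw]; omega

lemma gw_mono : Monotone gw := by
  apply monotone_nat_of_le_succ
  intro n
  rw [gw]
  have h1 := gw_pos n
  have h2 : 1 ≤ (n + 1) ^ (n + 1) := Nat.one_le_pow _ _ (by omega)
  calc gw n = 1 * gw n := (one_mul _).symm
    _ ≤ (n + 1) ^ (n + 1) * gw n := Nat.mul_le_mul_right _ h2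
    _ ≤ _ := Nat.le_succ _

/-- the measure -/
def meas (F : RTerm →₀ ℕ) : ℕ := F.sum fun t n => n * gw t.size

lemma meas_add (F G : RTerm →₀ ℕ) : meas (F + G) = meas F + meas G :=
  Finsupp.sum_add_index' (fun _ => by simp) (fun _ _ _ => by ring)

lemma meas_single (s : RTerm) : meas (Finsupp.single s 1) = gw s.size := by
  rw [meas, Finsupp.sum_single_index (by simp), one_mul]

lemma step_meas {s : RTerm} {𝒮 : RTerm →₀ ℕ} (h : Step s 𝒮) :
    meas 𝒮 < gw s.size := by
  obtain ⟨hsz, hm⟩ := step_bound h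
  obtain ⟨m, hs⟩ : ∃ m, s.size = m + 1 := ⟨s.size - 1, by have := size_pos s; omega⟩
  have h1 : meas 𝒮 ≤ mass 𝒮 * gw m := by
    rw [meas, Finsupp.sum, mass, Finsupp.sum, Finset.sum_mul]
    apply Finset.sum_le_sum
    intro t ht
    have h2 : t.size ≤ m := by have := hsz t ht; omega
    exact Nat.mul_le_mul_left _ (gw_mono h2)
  have h3 : mass 𝒮 * gw m ≤ (m + 1) ^ (m + 1) * gw m := by
    apply Nat.mul_le_mul_right
    calc mass 𝒮 ≤ s.size ^ s.size := hm
      _ = (m + 1) ^ (m + 1) := by rw [hs]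
  rw [hs, gw]
  omega

lemma rstep_meas {A B : RTerm →₀ ℕ} (h : RStep A B) : meas B < meas A := by
  cases h with
  | mk hstep =>
      rw [meas_add, meas_add, meas_single]
      have := step_meas hstep
      omega

end SN3

/-- **Strong normalization of β-reduction on the resource λ-calculus over ℕ**:
there is no infinite sequence of `→β` steps starting from an element of `ℕ⟨Δ⟩`. -/
theorem RStep_strongly_normalizing :
    ¬ ∃ f : ℕ → (RTerm →₀ ℕ), ∀ n, RStep (f n) (f (n + 1)) := by
  rintro ⟨f, hf⟩
  have hdec : ∀ n, meas (f (n + 1)) < meas (f n) := fun n => rstep_meas (hf n)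
  have key : ∀ n, meas (f n) + n ≤ meas (f 0) := by
    intro n
    induction n with
    | zero => omega
    | succ n ih => have := hdec n; omega
  have := key (meas (f 0) + 1)
  omega
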